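/- Let G be a bipartite graph with sides U and Γ such that the arboricity of G is at most α (every vertex subset S with |S| ≥ 2 spans at most α(|S|−1) edges) and every vertex of U has degree at least (5/ε + 1)·2α for some 0 < ε ≤ 1. Then G contains a matching that covers every vertex of U. -/

import Mathlib

open Finset SimpleGraph

theorem stmt_11 {V : Type*} [Fintype V] [DecidableEq V]
    (G : SimpleGraph V) [DecidableRel G.Adj]
    (α ε : ℝ) (hα : 1 ≤ α) (hε0 : 0 < ε) (hε1 : ε ≤ 1)
    (U Γ : Finset V) (hdisj : Disjoint U Γ)
    -- G is bipartite with sides U and Γ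
    (hbip : ∀ u v : V, G.Adj u v → (u ∈ U ∧ v ∈ Γ) ∨ (u ∈ Γ ∧ v ∈ U))
    -- arboricity at most α
    (harb : ∀ S : Finset V, 2 ≤ S.card →
      ((G.edgeFinset.filter fun e => ∀ v ∈ e, v ∈ S).card : ℝ) ≤ α * ((S.card : ℝ) - 1))
    -- every vertex of U has degree at least (5/ε + 1)·2α
    (hdeg : ∀ u ∈ U, (5 / ε + 1) * (2 * α) ≤ (G.degree u : ℝ)) :
    ∃ M : G.Subgraph, M.IsMatching ∧ ∀ u ∈ U, u ∈ M.verts := by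
  classical
  have hαpos : (0:ℝ) < α := lt_of_lt_of_le one_pos hα
  have hfive : (5:ℝ) ≤ 5 / ε := by
    rw [le_div_iff₀ hε0]; nlinarith
  -- neighbors of U-vertices lie in Γ
  have hNΓ : ∀ u ∈ U, ∀ w, G.Adj u w → w ∈ Γ := by
    intro u hu w hw
    rcases hbip u w hw with ⟨_, h⟩ | ⟨h, _⟩
    · exact h
    · exact absurd h (Finset.disjoint_left.mp hdisj hu)
  -- every U-vertex has a neighbor
  have hdeg1 : ∀ u ∈ U, 1 ≤ G.degree u := by
    intro u hu
    by_contra h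
    push_neg at h
    have h0 : G.degree u = 0 := by omega
    have := hdeg u hu
    rw [h0] at this
    norm_num at this
    nlinarith
  -- Hall's condition
  have hall : ∀ s : Finset {u // u ∈ U},
      s.card ≤ (s.biUnion fun a => G.neighborFinset a.1).card := by
    intro s
    rcases s.eq_empty_or_nonempty with rfl | ⟨a0, ha0⟩
    · simp
    set N : Finset V := s.biUnion fun a => G.neighborFinset a.1 with hN
    set W : Finset V := s.image (fun a => a.1) with hW
    have hWcard : W.card = s.card := Finset.card_image_of_injective s Subtype.val_injective
    have hWU : W ⊆ U := by
      intro u hu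
      simp only [hW, Finset.mem_image] at hu
      obtain ⟨a, _, rfl⟩ := hu
      exact a.2
    have hNsub : N ⊆ Γ := by
      intro w hw
      simp only [hN, Finset.mem_biUnion] at hw
      obtain ⟨a, _, hw⟩ := hw
      rw [SimpleGraph.mem_neighborFinset] at hw
      exact hNΓ a.1 a.2 w hw
    have hdisjWN : Disjoint W N :=
      Finset.disjoint_left.mpr fun x hx hx' =>
        Finset.disjoint_left.mp hdisj (hWU hx) (hNsub hx')
    set S : Finset V := W ∪ N with hS
    have hScard : S.card = W.card + N.card := Finset.card_union_of_disjoint hdisjWN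
    -- the set of edges incident to W
    set T : Finset (Sym2 V) :=
      s.biUnion (fun a => (G.neighborFinset a.1).image (fun w => s(a.1, w))) with hT
    have hTcard : T.card = ∑ a ∈ s, G.degree a.1 := by
      rw [hT, Finset.card_biUnion]
      · refine Finset.sum_congr rfl fun a _ => ?_
        rw [Finset.card_image_of_injOn, SimpleGraph.card_neighborFinset_eq_degree]
        intro w hw w' hw' hww
        simp only [Finset.mem_coe, SimpleGraph.mem_neighborFinset] at hw hw'
        rcases Sym2.eq_iff.mp hww with ⟨_, h2⟩ | ⟨h1, h2⟩
        · exact h2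
        · exact absurd (hNΓ a.1 a.2 w' hw') (Finset.disjoint_left.mp hdisj (h1 ▸ a.2))
      · intro a _ b _ hab
        simp only [Finset.disjoint_left, Finset.mem_image]
        rintro e ⟨w, hw, rfl⟩ ⟨w', hw', he⟩
        rw [SimpleGraph.mem_neighborFinset] at hw hw'
        rcases Sym2.eq_iff.mp he.symm with ⟨h1, _⟩ | ⟨h1, h2⟩
        · exact hab (Subtype.ext h1)
        · exact Finset.disjoint_left.mp hdisj b.2 (h2 ▸ hNΓ a.1 a.2 w hw)
    have hTsub : T ⊆ G.edgeFinset.filter fun e => ∀ v ∈ e, v ∈ S := by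
      intro e he
      simp only [hT, Finset.mem_biUnion, Finset.mem_image] at he
      obtain ⟨a, ha, w, hw, rfl⟩ := he
      rw [SimpleGraph.mem_neighborFinset] at hw
      rw [Finset.mem_filter, SimpleGraph.mem_edgeFinset]
      refine ⟨hw, ?_⟩
      intro v hv
      rcases Sym2.mem_iff.mp hv with rfl | rfl
      · exact Finset.mem_union_left _ (Finset.mem_image.mpr ⟨a, ha, rfl⟩)
      · exact Finset.mem_union_right _ (Finset.mem_biUnion.mpr ⟨a, ha,
          (SimpleGraph.mem_neighborFinset _ _ _).mpr hw⟩)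
    have hNne : N.Nonempty := by
      have h1 := hdeg1 a0.1 a0.2
      rw [← SimpleGraph.card_neighborFinset_eq_degree] at h1
      obtain ⟨w, hw⟩ := Finset.card_pos.mp h1
      exact ⟨w, Finset.mem_biUnion.mpr ⟨a0, ha0, hw⟩⟩
    have hS2 : 2 ≤ S.card := by
      rw [hScard]
      have h1 : 1 ≤ W.card := by
        rw [hWcard]; exact Finset.card_pos.mpr ⟨a0, ha0⟩
      have h2 : 1 ≤ N.card := Finset.card_pos.mpr hNne
      omega
    have hEbound := harb S hS2
    have hsum : (s.card : ℝ) * ((5 / ε + 1) * (2 * α)) ≤ ∑ a ∈ s, (G.degree a.1 : ℝ) := by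
      have := Finset.card_nsmul_le_sum s (fun a => (G.degree a.1 : ℝ))
        ((5 / ε + 1) * (2 * α)) (fun a _ => hdeg a.1 a.2)
      simpa [nsmul_eq_mul] using this
    have hTF : (∑ a ∈ s, (G.degree a.1 : ℝ)) ≤
        ((G.edgeFinset.filter fun e => ∀ v ∈ e, v ∈ S).card : ℝ) := by
      have h := Finset.card_le_card hTsub
      rw [hTcard] at h
      calc (∑ a ∈ s, (G.degree a.1 : ℝ)) = ((∑ a ∈ s, G.degree a.1 : ℕ) : ℝ) := by push_cast; ring
        _ ≤ _ := by exact_mod_cast h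
    have hk1 : (1:ℝ) ≤ (s.card : ℝ) := by
      exact_mod_cast Finset.card_pos.mpr ⟨a0, ha0⟩
    have h1 : (s.card : ℝ) * ((5 / ε + 1) * (2 * α)) ≤
        α * ((s.card : ℝ) + (N.card : ℝ) - 1) := by
      have : ((S.card : ℝ)) = (s.card : ℝ) + (N.card : ℝ) := by
        rw [hScard, ← hWcard]; push_cast; ring
      calc (s.card : ℝ) * ((5 / ε + 1) * (2 * α)) ≤ ∑ a ∈ s, (G.degree a.1 : ℝ) := hsum
        _ ≤ _ := hTF
        _ ≤ α * ((S.card : ℝ) - 1) := hEbound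
        _ = α * ((s.card : ℝ) + (N.card : ℝ) - 1) := by rw [this]
    have hfinal : (s.card : ℝ) ≤ (N.card : ℝ) := by
      set k : ℝ := (s.card : ℝ)
      set n : ℝ := (N.card : ℝ)
      have hk0 : (0:ℝ) ≤ k := by linarith
      have h2 : k * (12 * α) ≤ k * ((5 / ε + 1) * (2 * α)) := by
        nlinarith [mul_nonneg (mul_nonneg hk0 (by linarith : (0:ℝ) ≤ 2 * α))
          (by linarith : (0:ℝ) ≤ 5 / ε - 5)]
      have h3 : α * (12 * k) ≤ α * (k + n - 1) := by nlinarith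
      have h4 : 12 * k ≤ k + n - 1 := le_of_mul_le_mul_left h3 hαpos
      linarith
    exact_mod_cast hfinal
  -- apply Hall's theorem
  obtain ⟨f, hfinj, hfmem⟩ :=
    (Finset.all_card_le_biUnion_card_iff_exists_injective
      (fun a : {u // u ∈ U} => G.neighborFinset a.1)).mp hall
  have hadj : ∀ a : {u // u ∈ U}, G.Adj a.1 (f a) := fun a =>
    (SimpleGraph.mem_neighborFinset _ _ _).mp (hfmem a)
  have hfΓ : ∀ a : {u // u ∈ U}, f a ∈ Γ := fun a => hNΓ a.1 a.2 (f a) (hadj a)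
  -- build the matching
  refine ⟨{
    verts := ↑U ∪ Set.range f
    Adj := fun x y => (∃ a : {u // u ∈ U}, x = a.1 ∧ y = f a) ∨
      (∃ a : {u // u ∈ U}, y = a.1 ∧ x = f a)
    adj_sub := by
      rintro x y (⟨a, rfl, rfl⟩ | ⟨a, rfl, rfl⟩)
      · exact hadj a
      · exact (hadj a).symm
    edge_vert := by
      rintro x y (⟨a, rfl, rfl⟩ | ⟨a, rfl, rfl⟩)
      · exact Or.inl a.2
      · exact Or.inr ⟨a, rfl⟩
    symm := by
      constructor
      rintro x y (⟨a, h1, h2⟩ | ⟨a, h1, h2⟩)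
      · exact Or.inr ⟨a, h1, h2⟩
      · exact Or.inl ⟨a, h1, h2⟩ }, ?_, ?_⟩
  · rintro v (hv | ⟨a, rfl⟩)
    · -- v ∈ U
      have hvU : v ∈ U := hv
      refine ⟨f ⟨v, hvU⟩, Or.inl ⟨⟨v, hvU⟩, rfl, rfl⟩, ?_⟩
      rintro w (⟨a, ha1, ha2⟩ | ⟨a, ha1, ha2⟩)
      · have : a = ⟨v, hvU⟩ := Subtype.ext ha1.symm
        rw [ha2, this]
      · exact absurd (hfΓ a) (Finset.disjoint_left.mp hdisj (ha2 ▸ hvU))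
    · -- v = f a
      refine ⟨a.1, Or.inr ⟨a, rfl, rfl⟩, ?_⟩
      rintro w (⟨b, hb1, hb2⟩ | ⟨b, hb1, hb2⟩)
      · exact absurd (hfΓ a) (Finset.disjoint_left.mp hdisj (hb1 ▸ b.2))
      · have : b = a := hfinj hb2.symm
        rw [hb1, this]
  · intro u hu
    exact Or.inl hu
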